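/- Under the hypotheses of the main theorem, Goldman's curvature of the intersection curve ∂F ∩ P(ξ, u^j(ξ)) equals twice the directional curvature: k_G(ξ) = 2 κ̂_F(ξ, u^j(ξ)). -/

import Mathlib

open RealInnerProductSpace Filter Metric Topology

noncomputable section

abbrev Euc (n : ℕ) := EuclideanSpace ℝ (Fin n)

/-- The polar set `F°`. -/
def polarSet {n : ℕ} (F : Set (Euc n)) : Set (Euc n) := {y | ∀ x ∈ F, ⟪x, y⟫ ≤ 1}

/-- The normal cone of convex analysis to `F` at `ξ`. -/
def normalCone {n : ℕ} (F : Set (Euc n)) (ξ : Euc n) : Set (Euc n) :=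
  {ζ | ∀ y ∈ F, ⟪y - ξ, ζ⟫ ≤ 0}

/-- The tangent hyperplane to `F` at `ξ`. -/
def tangentHyp {n : ℕ} (F : Set (Euc n)) (ξ : Euc n) : Set (Euc n) :=
  {v | ∀ ζ ∈ normalCone F ξ, ⟪v, ζ⟫ = 0}

/-- The 2-dimensional plane `P(η, u) = span{∇f(η), u} + η`. -/
def planeP {n : ℕ} (f : Euc n → ℝ) (η u : Euc n) : Set (Euc n) :=
  {y | ∃ a b : ℝ, y = η + a • gradient f η + b • u}

/-- `η* = ∇f(η)/⟨η, ∇f(η)⟩`, the unique element of `N_F(η) ∩ ∂F°`. -/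
def etaStar {n : ℕ} (f : Euc n → ℝ) (η : Euc n) : Euc n :=
  (⟪η, gradient f η⟫)⁻¹ • gradient f η

/-- The 2-dimensional modulus of strict convexity `Ĉ_F(r, η, u)`. -/
def Chat {n : ℕ} (F : Set (Euc n)) (f : Euc n → ℝ) (r : ℝ) (η u : Euc n) : ℝ :=
  sInf {t | ∃ y, y ∈ F ∧ y ∈ planeP f η u ∧ r ≤ ‖η - y‖ ∧ t = ⟪η - y, etaStar f η⟫}

/-- The tangent vector at `η` corresponding to a tangent vector `u` at `ξ`: the
coordinates `j ≠ i` agree with those of `u` and the `i`-th coordinate is determined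
by tangency at `η`.  For `u = e_j` this is the tangent basis vector `u^j(η)`. -/
def uAt {n : ℕ} (f : Euc n → ℝ) (i : Fin n) (u : Euc n) (η : Euc n) : Euc n :=
  ∑ j ∈ Finset.univ.erase i,
    u j • (EuclideanSpace.single j (1:ℝ) -
      (gradient f η j / gradient f η i) • EuclideanSpace.single i (1:ℝ))

/-- The directional lower curvature `γ̂_F(ξ, u(ξ))`, a liminf of the directional modulus
of strict convexity over `r²` as `(r, η) → (0⁺, ξ)`, `η ∈ ∂F`. -/
def gammaDir {n : ℕ} (F : Set (Euc n)) (f : Euc n → ℝ) (i : Fin n) (ξ u : Euc n) : ℝ :=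
  Filter.liminf (fun p : ℝ × Euc n => Chat F f p.1 p.2 (uAt f i u p.2) / p.1 ^ 2)
    ((𝓝[>] (0:ℝ)) ×ˢ (𝓝 ξ ⊓ 𝓟 (frontier F)))

/-- The Hessian bilinear form `⟨∇²f(ξ)u, v⟩`. -/
def hessQ {n : ℕ} (f : Euc n → ℝ) (ξ u v : Euc n) : ℝ := ⟪fderiv ℝ (gradient f) ξ u, v⟫

lemma gradient_eq_comp {n : ℕ} (f : Euc n → ℝ) :
    gradient f = (⇑(InnerProductSpace.toDual ℝ (Euc n)).symm) ∘ (fderiv ℝ f) := rfl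

lemma hessQ_eq_sndFDeriv {n : ℕ} (f : Euc n → ℝ) (ξ : Euc n) (u v : Euc n) :
    hessQ f ξ u v = fderiv ℝ (fderiv ℝ f) ξ u v := by
  rw [hessQ, gradient_eq_comp, LinearIsometryEquiv.comp_fderiv,
    ContinuousLinearMap.comp_apply]
  exact InnerProductSpace.toDual_symm_apply

lemma hessQ_symm {n : ℕ} (f : Euc n → ℝ) (ξ : Euc n) (δ : ℝ) (hδ : 0 < δ)
    (hf : ContDiffOn ℝ 2 f (Metric.ball ξ δ)) (u v : Euc n) :
    hessQ f ξ u v = hessQ f ξ v u := by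
  have hca : ContDiffAt ℝ 2 f ξ := hf.contDiffAt (Metric.ball_mem_nhds ξ hδ)
  have := hca.isSymmSndFDerivAt (by simp)
  rw [hessQ_eq_sndFDeriv, hessQ_eq_sndFDeriv, this u v]

lemma hessQ_smul_left {n : ℕ} (f : Euc n → ℝ) (ξ : Euc n) (a : ℝ) (u v : Euc n) :
    hessQ f ξ (a • u) v = a * hessQ f ξ u v := by
  simp [hessQ, map_smul, inner_smul_left]

lemma hessQ_sub_left {n : ℕ} (f : Euc n → ℝ) (ξ : Euc n) (u w v : Euc n) :
    hessQ f ξ (u - w) v = hessQ f ξ u v - hessQ f ξ w v := by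
  simp [hessQ, map_sub, inner_sub_left]

lemma hessQ_smul_right {n : ℕ} (f : Euc n → ℝ) (ξ : Euc n) (a : ℝ) (u v : Euc n) :
    hessQ f ξ u (a • v) = a * hessQ f ξ u v := by
  simp [hessQ, inner_smul_right]

lemma hessQ_sub_right {n : ℕ} (f : Euc n → ℝ) (ξ : Euc n) (u v w : Euc n) :
    hessQ f ξ u (v - w) = hessQ f ξ u v - hessQ f ξ u w := by
  simp [hessQ, inner_sub_right]
lemma uAt_single {n : ℕ} (f : Euc n → ℝ) (i : Fin n) (η : Euc n) (j : Fin n) (hj : j ≠ i) :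
    uAt f i (EuclideanSpace.single j 1) η =
      EuclideanSpace.single j (1:ℝ) -
        (gradient f η j / gradient f η i) • EuclideanSpace.single i (1:ℝ) := by
  rw [uAt, Finset.sum_eq_single_of_mem j (Finset.mem_erase.2 ⟨hj, Finset.mem_univ j⟩)]
  · simp
  · intro k _ hk
    simp [EuclideanSpace.single_apply, hk]

lemma norm_sq_single_sub {n : ℕ} (i j : Fin n) (hj : j ≠ i) (c : ℝ) :
    ‖EuclideanSpace.single j (1:ℝ) - c • EuclideanSpace.single i (1:ℝ)‖ ^ 2 = 1 + c ^ 2 := by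
  rw [← real_inner_self_eq_norm_sq]
  simp only [inner_sub_left, inner_sub_right, inner_smul_left, inner_smul_right,
    EuclideanSpace.inner_single_left, EuclideanSpace.single_apply, hj, hj.symm]
  simp [hj, hj.symm]
  ring

lemma inner_gradient_eq {n : ℕ} (f : Euc n → ℝ) (x v : Euc n) :
    ⟪gradient f x, v⟫ = fderiv ℝ f x v := InnerProductSpace.toDual_symm_apply

lemma support_le {n : ℕ} (F : Set (Euc n)) (hF : IsCompact F)
    (hFc : Convex ℝ F) (ξ : Euc n) (hξ : ξ ∈ frontier F)
    (f : Euc n → ℝ) (δ : ℝ) (hδ : 0 < δ) (hf : ContDiffOn ℝ 2 f (Metric.ball ξ δ))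
    (hFf : F ⊆ {x | f x ≤ 0})
    (hbd : ∀ x ∈ Metric.ball ξ δ, (x ∈ frontier F ↔ f x = 0)) :
    ∀ y ∈ F, ⟪gradient f ξ, y - ξ⟫ ≤ 0 := by
  have hclosed : IsClosed F := hF.isClosed
  have hξF : ξ ∈ F := by
    have := frontier_subset_closure (s := F) hξ
    rwa [hclosed.closure_eq] at this
  have hfξ : f ξ = 0 := (hbd ξ (Metric.mem_ball_self hδ)).1 hξ
  have hdiff : DifferentiableAt ℝ f ξ :=
    (hf.contDiffAt (Metric.ball_mem_nhds ξ hδ)).differentiableAt (by norm_num)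
  intro y hy
  set φ : ℝ → ℝ := fun t => f (ξ + t • (y - ξ)) with hφdef
  have hline : HasDerivAt (fun t : ℝ => ξ + t • (y - ξ)) (y - ξ) 0 := by
    simpa using ((hasDerivAt_id (0:ℝ)).smul_const (y - ξ)).const_add ξ
  have hφ : HasDerivAt φ (fderiv ℝ f ξ (y - ξ)) 0 := by
    have h1 : HasFDerivAt f (fderiv ℝ f ξ) (ξ + (0:ℝ) • (y - ξ)) := by
      simpa using hdiff.hasFDerivAt
    exact h1.comp_hasDerivAt 0 hline
  have hφ0 : φ 0 = 0 := by simp [hφdef, hfξ]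
  have hmem : ∀ t ∈ Set.Ioc (0:ℝ) 1, φ t ≤ 0 := by
    intro t ht
    have : ξ + t • (y - ξ) ∈ F := by
      have := hFc hξF hy (by linarith [ht.2] : (0:ℝ) ≤ 1 - t) (le_of_lt ht.1) (by ring)
      convert this using 1
      module
    exact hFf this
  have hslope : Tendsto (slope φ 0) (𝓝[>] (0:ℝ)) (𝓝 (fderiv ℝ f ξ (y - ξ))) :=
    (hasDerivAt_iff_tendsto_slope.1 hφ).mono_left
      (nhdsWithin_mono 0 (fun t ht => ne_of_gt ht))
  have hev : ∀ᶠ t in 𝓝[>] (0:ℝ), slope φ 0 t ≤ 0 := by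
    filter_upwards [Ioo_mem_nhdsGT_of_mem (Set.left_mem_Ico.2 one_pos)] with t ht
    have hφt : φ t ≤ 0 := hmem t ⟨ht.1, le_of_lt ht.2⟩
    rw [slope_def_field]
    simp only [hφ0, sub_zero]
    rw [div_eq_mul_inv]
    exact mul_nonpos_of_nonpos_of_nonneg (by simpa using hφt) (inv_nonneg.2 ht.1.le)
  have := le_of_tendsto hslope hev
  rw [inner_gradient_eq]
  exact this

lemma hasDerivAt_along {n : ℕ} (f : Euc n → ℝ) (ξ : Euc n) (δ : ℝ)
    (hf : ContDiffOn ℝ 2 f (Metric.ball ξ δ)) (a v : Euc n) (s : ℝ)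
    (hmem : a + s • v ∈ Metric.ball ξ δ) :
    HasDerivAt (fun s => f (a + s • v)) (⟪gradient f (a + s • v), v⟫) s := by
  have hline : HasDerivAt (fun s : ℝ => a + s • v) v s := by
    simpa using ((hasDerivAt_id s).smul_const v).const_add a
  have hd : DifferentiableAt ℝ f (a + s • v) :=
    (hf.contDiffAt (isOpen_ball.mem_nhds hmem)).differentiableAt (by norm_num)
  have := hd.hasFDerivAt.comp_hasDerivAt s hline
  rw [inner_gradient_eq]
  exact this

set_option maxHeartbeats 1000000 in
lemma hessQ_nonneg_tangent {n : ℕ} (F : Set (Euc n)) (hF : IsCompact F)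
    (hFc : Convex ℝ F) (ξ : Euc n) (hξ : ξ ∈ frontier F)
    (f : Euc n → ℝ) (δ : ℝ) (hδ : 0 < δ) (hf : ContDiffOn ℝ 2 f (Metric.ball ξ δ))
    (hFf : F ⊆ {x | f x ≤ 0})
    (hbd : ∀ x ∈ Metric.ball ξ δ, (x ∈ frontier F ↔ f x = 0))
    (hgne : gradient f ξ ≠ 0)
    (u : Euc n) (hu : ⟪gradient f ξ, u⟫ = 0) : 0 ≤ hessQ f ξ u u := by
  rcases eq_or_ne u 0 with rfl | hu0
  · simp [hessQ]
  by_contra hQc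
  push_neg at hQc
  set Q := hessQ f ξ u u with hQdef
  set d := gradient f ξ with hddef
  have hclosed : IsClosed F := hF.isClosed
  have hfrF : ∀ x, x ∈ frontier F → x ∈ F := by
    intro x hx
    have := frontier_subset_closure (s := F) hx
    rwa [hclosed.closure_eq] at this
  have hfξ : f ξ = 0 := (hbd ξ (Metric.mem_ball_self hδ)).1 hξ
  have hsupp : ∀ y ∈ F, ⟪d, y - ξ⟫ ≤ 0 :=
    support_le F hF hFc ξ hξ f δ hδ hf hFf hbd
  have hupos : (0:ℝ) < ‖u‖ := norm_pos_iff.2 hu0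
  -- differentiability of the gradient at ξ
  have hgrad1 : ContDiffOn ℝ 1 (fderiv ℝ f) (Metric.ball ξ δ) :=
    hf.fderiv_of_isOpen isOpen_ball (by norm_num)
  have hgdiff : DifferentiableAt ℝ (fderiv ℝ f) ξ :=
    (hgrad1.contDiffAt (Metric.ball_mem_nhds ξ hδ)).differentiableAt one_ne_zero
  have hgradDiffAt : DifferentiableAt ℝ (gradient f) ξ := by
    rw [gradient_eq_comp]
    exact ((InnerProductSpace.toDual ℝ (Euc n)).symm.differentiable.differentiableAt).comp ξ hgdiff
  have hgradCont : ContinuousOn (gradient f) (Metric.ball ξ δ) := by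
    rw [gradient_eq_comp]
    exact (InnerProductSpace.toDual ℝ (Euc n)).symm.continuous.comp_continuousOn
      hgrad1.continuousOn
  -- the function φ s = ⟪∇f(ξ + s u), u⟫ and its derivative at 0
  set φ : ℝ → ℝ := fun s => ⟪gradient f (ξ + s • u), u⟫ with hφdef
  have hφ0 : φ 0 = 0 := by simpa [hφdef, hddef] using hu
  have hline0 : HasDerivAt (fun s : ℝ => ξ + s • u) u 0 := by
    simpa using ((hasDerivAt_id (0:ℝ)).smul_const u).const_add ξ
  have hgr : HasDerivAt (fun s : ℝ => gradient f (ξ + s • u))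
      (fderiv ℝ (gradient f) ξ u) 0 := by
    have h1 : HasFDerivAt (gradient f) (fderiv ℝ (gradient f) ξ) (ξ + (0:ℝ) • u) := by
      simpa using hgradDiffAt.hasFDerivAt
    exact h1.comp_hasDerivAt 0 hline0
  have hφder : HasDerivAt φ Q 0 := by
    have h2 := (((innerSL ℝ).flip u).hasFDerivAt).comp_hasDerivAt 0 hgr
    exact h2
  -- φ is negative just to the right of 0
  have hslope : Tendsto (slope φ 0) (𝓝[>] (0:ℝ)) (𝓝 Q) :=
    (hasDerivAt_iff_tendsto_slope.1 hφder).mono_left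
      (nhdsWithin_mono 0 (fun t ht => ne_of_gt ht))
  have hev : ∀ᶠ s in 𝓝[>] (0:ℝ), φ s < 0 := by
    filter_upwards [(tendsto_order.1 hslope).2 (Q/2) (by linarith), self_mem_nhdsWithin]
      with s hs hs0
    have hs0' : (0:ℝ) < s := hs0
    rw [slope_def_field, hφ0, sub_zero, sub_zero, div_lt_iff₀ hs0'] at hs
    nlinarith
  obtain ⟨ε1, hε1, hφneg⟩ : ∃ ε1 ∈ Set.Ioi (0:ℝ), Set.Ioo 0 ε1 ⊆ {s | φ s < 0} :=
    mem_nhdsGT_iff_exists_Ioo_subset.1 hev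
  -- f(ξ + t u) < 0 for small positive t
  set ε : ℝ := min ε1 (δ / ‖u‖) with hεdef
  have hεpos : 0 < ε := lt_min hε1 (div_pos hδ hupos)
  have hB : ∀ t, 0 < t → t < ε → f (ξ + t • u) < 0 := by
    intro t ht0 htε
    have hmem : ∀ s ∈ Set.Icc (0:ℝ) t, ξ + s • u ∈ Metric.ball ξ δ := by
      intro s hs
      rw [Metric.mem_ball, dist_eq_norm]
      have : ξ + s • u - ξ = s • u := by abel
      rw [this, norm_smul, Real.norm_eq_abs, abs_of_nonneg hs.1]
      have h1 : s < δ / ‖u‖ := lt_of_le_of_lt hs.2 (lt_of_lt_of_le htε (min_le_right _ _))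
      calc s * ‖u‖ < (δ / ‖u‖) * ‖u‖ := by exact mul_lt_mul_of_pos_right h1 hupos
        _ = δ := div_mul_cancel₀ δ (ne_of_gt hupos)
    have hgder : ∀ s ∈ Set.Icc (0:ℝ) t, HasDerivAt (fun s => f (ξ + s • u)) (φ s) s := by
      intro s hs
      exact hasDerivAt_along f ξ δ hf ξ u s (hmem s hs)
    have hcont : ContinuousOn (fun s => f (ξ + s • u)) (Set.Icc 0 t) :=
      fun s hs => ((hgder s hs).continuousAt).continuousWithinAt
    obtain ⟨c, hc, hceq⟩ := exists_hasDerivAt_eq_slope (fun s => f (ξ + s • u)) φ ht0 hcont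
      (fun s hs => hgder s ⟨hs.1.le, hs.2.le⟩)
    have hφc : φ c < 0 := hφneg ⟨hc.1, lt_trans hc.2 (lt_of_lt_of_le htε (min_le_left _ _))⟩
    have hg0 : f (ξ + (0:ℝ) • u) = 0 := by simpa using hfξ
    rw [hg0, sub_zero, sub_zero] at hceq
    have : f (ξ + t • u) = t * φ c := by
      field_simp at hceq
      linarith [hceq]
    rw [this]
    exact mul_neg_of_pos_of_neg ht0 hφc
  -- continuity bound for the inner product with the gradient
  set N : ℝ := ⟪d, d⟫ with hNdef
  have hN : 0 < N := by
    rw [hNdef, real_inner_self_eq_norm_sq]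
    have : (0:ℝ) < ‖d‖ := norm_pos_iff.2 hgne
    positivity
  have hψc : ContinuousAt (fun x => ⟪d, gradient f x⟫) ξ :=
    ContinuousAt.inner continuousAt_const (hgradCont.continuousAt (Metric.ball_mem_nhds ξ hδ))
  have hψev : ∀ᶠ x in 𝓝 ξ, N / 2 < ⟪d, gradient f x⟫ := by
    have : Tendsto (fun x => ⟪d, gradient f x⟫) (𝓝 ξ) (𝓝 N) := hψc
    exact (tendsto_order.1 this).1 (N/2) (by linarith)
  obtain ⟨ρ₀, hρ₀, hψball⟩ := Metric.eventually_nhds_iff.1 hψev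
  set ρ : ℝ := min ρ₀ δ with hρdef
  have hρpos : 0 < ρ := lt_min hρ₀ hδ
  have hρδ : ρ ≤ δ := min_le_right _ _
  have hψρ : ∀ x, dist x ξ < ρ → N / 2 < ⟪d, gradient f x⟫ :=
    fun x hx => hψball (lt_of_lt_of_le hx (min_le_left _ _))
  have hdpos : (0:ℝ) < ‖d‖ := norm_pos_iff.2 hgne
  set S : ℝ := ρ / (2 * (‖d‖ + 1)) with hSdef
  have hSpos : 0 < S := div_pos hρpos (by positivity)
  have hSd : S * ‖d‖ < ρ / 2 := by
    rw [hSdef, div_mul_eq_mul_div, div_lt_div_iff₀ (by positivity) (by norm_num)]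
    nlinarith
  -- choose a suitable small t > 0
  have hevt : ∀ᶠ t in 𝓝[>] (0:ℝ),
      (0 < t ∧ t < ε) ∧ t * ‖u‖ < ρ / 2 ∧ -(S * N / 4) < f (ξ + t • u) := by
    have e1 : ∀ᶠ t in 𝓝[>] (0:ℝ), 0 < t ∧ t < ε := by
      filter_upwards [Ioo_mem_nhdsGT_of_mem (Set.left_mem_Ico.2 hεpos)] with t ht
      exact ⟨ht.1, ht.2⟩
    have e2 : ∀ᶠ t in 𝓝[>] (0:ℝ), t * ‖u‖ < ρ / 2 := by
      have hc : Tendsto (fun t : ℝ => t * ‖u‖) (𝓝[>] 0) (𝓝 (0 * ‖u‖)) :=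
        (tendsto_id.mul_const ‖u‖).mono_left nhdsWithin_le_nhds
      rw [zero_mul] at hc
      exact (tendsto_order.1 hc).2 (ρ/2) (by linarith)
    have e3 : ∀ᶠ t in 𝓝[>] (0:ℝ), -(S * N / 4) < f (ξ + t • u) := by
      have hcf : ContinuousAt (fun t : ℝ => f (ξ + t • u)) 0 := by
        have hD := hasDerivAt_along f ξ δ hf ξ u 0 (by simpa using hδ)
        exact hD.continuousAt
      have : Tendsto (fun t : ℝ => f (ξ + t • u)) (𝓝[>] 0) (𝓝 (f (ξ + (0:ℝ) • u))) :=
        hcf.continuousWithinAt.tendsto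
      have h0 : f (ξ + (0:ℝ) • u) = 0 := by simpa using hfξ
      rw [h0] at this
      exact (tendsto_order.1 this).1 _ (by nlinarith)
    filter_upwards [e1, e2, e3] with t h1 h2 h3
    exact ⟨h1, h2, h3⟩
  obtain ⟨t, ⟨ht0, htε⟩, htu, htf⟩ := hevt.exists
  -- the segment in the e_i-like direction d
  set a : Euc n := ξ + t • u with hadef
  have hmem2 : ∀ s ∈ Set.Icc (0:ℝ) S, a + s • d ∈ Metric.ball ξ ρ := by
    intro s hs
    rw [Metric.mem_ball, dist_eq_norm]
    have h1 : a + s • d - ξ = t • u + s • d := by rw [hadef]; abel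
    rw [h1]
    calc ‖t • u + s • d‖ ≤ ‖t • u‖ + ‖s • d‖ := norm_add_le _ _
      _ = t * ‖u‖ + s * ‖d‖ := by
          rw [norm_smul, norm_smul, Real.norm_eq_abs, Real.norm_eq_abs,
            abs_of_nonneg ht0.le, abs_of_nonneg hs.1]
      _ ≤ t * ‖u‖ + S * ‖d‖ := by
          have := mul_le_mul_of_nonneg_right hs.2 hdpos.le
          linarith
      _ < ρ / 2 + ρ / 2 := by linarith
      _ = ρ := by ring
  have hmem2' : ∀ s ∈ Set.Icc (0:ℝ) S, a + s • d ∈ Metric.ball ξ δ :=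
    fun s hs => Metric.ball_subset_ball hρδ (hmem2 s hs)
  have hhder : ∀ s ∈ Set.Icc (0:ℝ) S, HasDerivAt (fun s => f (a + s • d))
      (⟪gradient f (a + s • d), d⟫) s :=
    fun s hs => hasDerivAt_along f ξ δ hf a d s (hmem2' s hs)
  have hhcont : ContinuousOn (fun s => f (a + s • d)) (Set.Icc 0 S) :=
    fun s hs => ((hhder s hs).continuousAt).continuousWithinAt
  have hh0 : f (a + (0:ℝ) • d) = f a := by simp
  have hh0neg : f a < 0 := hB t ht0 htε
  -- lower bound for f at the far end of the segment
  have hhS : 0 < f (a + S • d) := by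
    obtain ⟨c, hc, hceq⟩ := exists_hasDerivAt_eq_slope (fun s => f (a + s • d))
      (fun s => ⟪gradient f (a + s • d), d⟫) hSpos hhcont
      (fun s hs => hhder s ⟨hs.1.le, hs.2.le⟩)
    have hcm : a + c • d ∈ Metric.ball ξ ρ := hmem2 c ⟨hc.1.le, hc.2.le⟩
    have hlow : N / 2 < ⟪gradient f (a + c • d), d⟫ := by
      have := hψρ (a + c • d) (Metric.mem_ball.1 hcm)
      rwa [real_inner_comm] at this
    rw [hceq, hh0, sub_zero] at hlow
    rw [div_lt_div_iff₀ (by norm_num) hSpos] at hlow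
    nlinarith
  -- IVT gives a boundary point on the segment
  have h0mem : (0:ℝ) ∈ Set.Icc (f (a + (0:ℝ) • d)) (f (a + S • d)) := by
    rw [hh0]; exact ⟨hh0neg.le, hhS.le⟩
  obtain ⟨s, hsI, hs0⟩ := intermediate_value_Icc hSpos.le hhcont h0mem
  have hsne : s ≠ 0 := by
    intro h
    rw [h] at hs0
    have h2 : f (a + (0:ℝ) • d) = 0 := hs0
    rw [hh0] at h2
    exact absurd h2 (ne_of_lt hh0neg)
  have hspos : 0 < s := lt_of_le_of_ne hsI.1 (Ne.symm hsne)
  set y : Euc n := a + s • d with hydef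
  have hyball : y ∈ Metric.ball ξ δ := hmem2' s hsI
  have hyF : y ∈ F := hfrF y ((hbd y hyball).2 hs0)
  have := hsupp y hyF
  have hyξ : y - ξ = t • u + s • d := by rw [hydef, hadef]; abel
  rw [hyξ, inner_add_right, inner_smul_right, inner_smul_right, hu] at this
  nlinarith
/-- Goldman's curvature of the intersection curve `∂F ∩ P(ξ, u^j(ξ))`, given by
`k_G(ξ) = |f_{x_ix_i}f_{x_j}² − 2f_{x_i}f_{x_j}f_{x_ix_j} + f_{x_jx_j}f_{x_i}²| /
(‖∇f(ξ)‖(f_{x_i}² + f_{x_j}²))`, equals twice the directional curvature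
`κ̂_F(ξ, u^j(ξ)) = ⟨∇²f(ξ)u^j(ξ), u^j(ξ)⟩/(2‖∇f(ξ)‖‖u^j(ξ)‖²)`. -/

theorem goldmanCurv_eq_twice_directional_curvature
    {n : ℕ} (hn : 2 ≤ n) (F : Set (Euc n)) (hF : IsCompact F) (hFc : Convex ℝ F)
    (h0 : (0 : Euc n) ∈ interior F) (ξ : Euc n) (hξ : ξ ∈ frontier F)
    (f : Euc n → ℝ) (δ : ℝ) (hδ : 0 < δ) (hf : ContDiffOn ℝ 2 f (Metric.ball ξ δ))
    (hFf : F ⊆ {x | f x ≤ 0}) (hgr : 0 < ⟪ξ, gradient f ξ⟫)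
    (hbd : ∀ x ∈ Metric.ball ξ δ, (x ∈ frontier F ↔ f x = 0))
    (i : Fin n) (hi : gradient f ξ i ≠ 0) (hifirst : ∀ k < i, gradient f ξ k = 0)
    (j : Fin n) (hj : j ≠ i) :
    |hessQ f ξ (EuclideanSpace.single i 1) (EuclideanSpace.single i 1) *
        gradient f ξ j ^ 2 -
      2 * gradient f ξ i * gradient f ξ j *
        hessQ f ξ (EuclideanSpace.single i 1) (EuclideanSpace.single j 1) +
      hessQ f ξ (EuclideanSpace.single j 1) (EuclideanSpace.single j 1) *
        gradient f ξ i ^ 2| /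
      (‖gradient f ξ‖ * (gradient f ξ i ^ 2 + gradient f ξ j ^ 2)) =
    2 * (hessQ f ξ (uAt f i (EuclideanSpace.single j 1) ξ)
            (uAt f i (EuclideanSpace.single j 1) ξ) /
          (2 * ‖gradient f ξ‖ * ‖uAt f i (EuclideanSpace.single j 1) ξ‖ ^ 2)) := by
  have hgne : gradient f ξ ≠ 0 := by
    intro h
    rw [h] at hgr
    simp at hgr
  set c : ℝ := gradient f ξ j / gradient f ξ i with hc
  have huAt : uAt f i (EuclideanSpace.single j 1) ξ =
      EuclideanSpace.single j (1:ℝ) - c • EuclideanSpace.single i (1:ℝ) :=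
    uAt_single f i ξ j hj
  have hu : ⟪gradient f ξ, uAt f i (EuclideanSpace.single j 1) ξ⟫ = 0 := by
    rw [huAt, inner_sub_right, inner_smul_right, EuclideanSpace.inner_single_right,
      EuclideanSpace.inner_single_right]
    simp only [map_one, one_mul, hc]
    field_simp
    simp only [conj_trivial]
    ring
  have hnn : 0 ≤ hessQ f ξ (uAt f i (EuclideanSpace.single j 1) ξ)
      (uAt f i (EuclideanSpace.single j 1) ξ) :=
    hessQ_nonneg_tangent F hF hFc ξ hξ f δ hδ hf hFf hbd hgne _ hu
  have hsymm := hessQ_symm f ξ δ hδ hf (EuclideanSpace.single j (1:ℝ))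
    (EuclideanSpace.single i (1:ℝ))
  set Qii := hessQ f ξ (EuclideanSpace.single i (1:ℝ)) (EuclideanSpace.single i (1:ℝ)) with hQii
  set Qij := hessQ f ξ (EuclideanSpace.single i (1:ℝ)) (EuclideanSpace.single j (1:ℝ)) with hQij
  set Qjj := hessQ f ξ (EuclideanSpace.single j (1:ℝ)) (EuclideanSpace.single j (1:ℝ)) with hQjj
  have hQexp : hessQ f ξ (uAt f i (EuclideanSpace.single j 1) ξ)
      (uAt f i (EuclideanSpace.single j 1) ξ) = Qjj - 2 * c * Qij + c ^ 2 * Qii := by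
    rw [huAt, hessQ_sub_left, hessQ_sub_right, hessQ_sub_right, hessQ_smul_left,
      hessQ_smul_left, hessQ_smul_right, hessQ_smul_right, hsymm]
    ring
  have hnormsq : ‖uAt f i (EuclideanSpace.single j 1) ξ‖ ^ 2 = 1 + c ^ 2 := by
    rw [huAt]
    exact norm_sq_single_sub i j hj c
  have hgnorm : (0:ℝ) < ‖gradient f ξ‖ := norm_pos_iff.2 hgne
  have hA : Qii * gradient f ξ j ^ 2 - 2 * gradient f ξ i * gradient f ξ j * Qij +
      Qjj * gradient f ξ i ^ 2 = gradient f ξ i ^ 2 *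
        hessQ f ξ (uAt f i (EuclideanSpace.single j 1) ξ)
          (uAt f i (EuclideanSpace.single j 1) ξ) := by
    rw [hQexp, hc]
    field_simp
    ring
  rw [hA, abs_of_nonneg (by positivity), hQexp, hnormsq]
  have hgij : gradient f ξ i ^ 2 + gradient f ξ j ^ 2 =
      gradient f ξ i ^ 2 * (1 + c ^ 2) := by
    rw [hc]
    field_simp
  rw [hgij]
  have h1c : (0:ℝ) < 1 + c ^ 2 := by positivity
  have hg0 : ‖gradient f ξ‖ ≠ 0 := hgnorm.ne'
  have h1c0 : (1:ℝ) + c ^ 2 ≠ 0 := h1c.ne'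
  field_simp
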